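/- Let τ : Σ → Σ be a bijection with τ(Σ₂) = Σ₂, τ(w_{2k−1}) = w_{2k}, τ(w_{2k}) = w_{2k−1}, τ(t_{2k−1}) = t_{2k} and τ(t_{2k}) = t_{2k−1} for all 1 ≤ k ≤ 2^{ν−1}, and let T : G(Σ, e) → G(Σ, e) be the automorphism determined by T(Ψ_s) = Ψ_{τ(s)}. With u_i and v_i defined by u_{2k−1} := Ψ_{w_{2k−1}} − Ψ_w and u_{2k} := Ψ_{w_{2k−1}} + Ψ_{w_{2k}} − Ψ_w − Ψ_{w'} for 1 ≤ k ≤ 2^{ν−1} − 2, u_{2^ν−3} := Ψ_{w_{2^ν−3}} − Ψ_w, u_{2^ν−2} := Ψ_{w_{2^ν−3}} − Ψ_{w_{2^ν−2}}, v_{2k−1} := Ψ_{t_{2k−1}} − Ψ_{t_{2k}} for 1 ≤ k ≤ 2^{ν−1} and v_{2k} := Ψ_{t_{2k−1}} + Ψ_{t_{2k}} − Ψ_t − Ψ_{t'} for 1 ≤ k ≤ 2^{ν−1} − 1, one has: T(Ψ_w) = (1 + m)·Ψ_w + Σ_{i=1}^{2^{ν−1}−1} u_{2i}; T(u_{2k−1})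 = u_{2k−1} + u_{2k} and T(u_{2k}) = u_{2k} for 1 ≤ k ≤ 2^{ν−1} − 2; T(u_{2^ν−3}) = m·Ψ_w + u_{2^ν−3} + Σ_{i=1}^{2^{ν−1}−2} u_{2i}; T(u_{2^ν−2}) = u_{2^ν−2}; T(v_{2k−1}) = −v_{2k−1}; and T(v_{2k}) = v_{2k}. -/

import Mathlib

/-- The subgroup of relations: `e s • ψ s - e t • ψ t` for all `s t`, together with
`∑ s, ψ s`. -/
noncomputable def relSub {S : Type*} [Fintype S] (e : S → ℤ) : AddSubgroup (S →₀ ℤ) :=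
  AddSubgroup.closure
    ({x | ∃ s t : S, x = Finsupp.single s (e s) - Finsupp.single t (e t)} ∪
      {∑ s : S, Finsupp.single s 1})

/-- `G(Σ, e)`: the quotient of the free abelian group on `Σ` by the relations. -/
abbrev CompGrp {S : Type*} [Fintype S] (e : S → ℤ) : Type _ :=
  (S →₀ ℤ) ⧸ relSub e

/-- `Ψ s`: the image of the basis element `ψ s` in `G(Σ, e)`. -/
noncomputable def Psi {S : Type*} [Fintype S] (e : S → ℤ) (s : S) : CompGrp e :=
  QuotientAddGroup.mk (Finsupp.single s 1)

/-- `Σ = Σ₂ ⊔ Σ₄ ⊔ Σ₆` with `#Σ₂ = s₂` and `#Σ₄ = #Σ₆ = 2^ν`. -/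
abbrev Sig4 (s₂ ν : ℕ) : Type := Fin s₂ ⊕ (Fin (2 ^ ν) ⊕ Fin (2 ^ ν))

/-- `e ≡ 1` on `Σ₂`, `e ≡ 2` on `Σ₄` and `e ≡ 3` on `Σ₆`. -/
def e4 (s₂ ν : ℕ) : Sig4 s₂ ν → ℤ :=
  Sum.elim (fun _ => 1) (Sum.elim (fun _ => 2) (fun _ => 3))

/-- `w i` (`1`-based): the `i`-th point of `Σ₄ = {w_1, …, w_{2^ν}}`. -/
def wPt4 (s₂ ν : ℕ) (i : ℕ) : Sig4 s₂ ν :=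
  Sum.inr (Sum.inl ⟨(i - 1) % 2 ^ ν, Nat.mod_lt _ (Nat.pow_pos (n := ν) (by norm_num))⟩)

/-- `t i` (`1`-based): the `i`-th point of `Σ₆ = {t_1, …, t_{2^ν}}`. -/
def tPt4 (s₂ ν : ℕ) (i : ℕ) : Sig4 s₂ ν :=
  Sum.inr (Sum.inr ⟨(i - 1) % 2 ^ ν, Nat.mod_lt _ (Nat.pow_pos (n := ν) (by norm_num))⟩)

/-- The generators `u_j` (`1`-based, `u_0 := Ψ w` with `w = w_{2^ν - 1}`):
for `1 ≤ k ≤ 2^{ν-1} - 2`, `u_{2k-1} = Ψ w_{2k-1} - Ψ w` and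
`u_{2k} = Ψ w_{2k-1} + Ψ w_{2k} - Ψ w - Ψ w'` (with `w' = w_{2^ν}`); and
`u_{2^ν-3} = Ψ w_{2^ν-3} - Ψ w` (the odd-index formula again),
`u_{2^ν-2} = Ψ w_{2^ν-3} - Ψ w_{2^ν-2}`. -/
noncomputable def uGen4 (s₂ ν : ℕ) : ℕ → CompGrp (e4 s₂ ν) := fun j =>
  if j = 0 then Psi (e4 s₂ ν) (wPt4 s₂ ν (2 ^ ν - 1))
  else if j = 2 ^ ν - 2 then
    Psi (e4 s₂ ν) (wPt4 s₂ ν (2 ^ ν - 3)) - Psi (e4 s₂ ν) (wPt4 s₂ ν (2 ^ ν - 2))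
  else if j % 2 = 1 then
    Psi (e4 s₂ ν) (wPt4 s₂ ν j) - Psi (e4 s₂ ν) (wPt4 s₂ ν (2 ^ ν - 1))
  else
    Psi (e4 s₂ ν) (wPt4 s₂ ν (j - 1)) + Psi (e4 s₂ ν) (wPt4 s₂ ν j)
      - Psi (e4 s₂ ν) (wPt4 s₂ ν (2 ^ ν - 1)) - Psi (e4 s₂ ν) (wPt4 s₂ ν (2 ^ ν))

/-- The generators `v_j` (`1`-based): `v_{2k-1} = Ψ t_{2k-1} - Ψ t_{2k}` for
`1 ≤ k ≤ 2^{ν-1}` and `v_{2k} = Ψ t_{2k-1} + Ψ t_{2k} - Ψ t - Ψ t'` for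
`1 ≤ k ≤ 2^{ν-1} - 1` (with `t = t_{2^ν - 1}`, `t' = t_{2^ν}`). -/
noncomputable def vGen4 (s₂ ν : ℕ) : ℕ → CompGrp (e4 s₂ ν) := fun j =>
  if j % 2 = 1 then
    Psi (e4 s₂ ν) (tPt4 s₂ ν j) - Psi (e4 s₂ ν) (tPt4 s₂ ν (j + 1))
  else
    Psi (e4 s₂ ν) (tPt4 s₂ ν (j - 1)) + Psi (e4 s₂ ν) (tPt4 s₂ ν j)
      - Psi (e4 s₂ ν) (tPt4 s₂ ν (2 ^ ν - 1)) - Psi (e4 s₂ ν) (tPt4 s₂ ν (2 ^ ν))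

/- ==== auxiliary lemmas ==== -/

lemma psi_rel {S : Type*} [Fintype S] (e : S → ℤ) (s t : S) :
    e s • Psi e s = e t • Psi e t := by
  unfold Psi
  rw [← QuotientAddGroup.mk_zsmul, ← QuotientAddGroup.mk_zsmul, QuotientAddGroup.eq]
  apply AddSubgroup.subset_closure
  left
  refine ⟨t, s, ?_⟩
  simp [Finsupp.smul_single]
  abel

lemma psi_sum {S : Type*} [Fintype S] (e : S → ℤ) :
    ∑ s : S, Psi e s = 0 := by
  have h0 : (QuotientAddGroup.mk (∑ s : S, Finsupp.single s (1:ℤ)) : CompGrp e) = 0 :=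
    (QuotientAddGroup.eq_zero_iff _).mpr (AddSubgroup.subset_closure (Or.inr rfl))
  rw [← h0]
  exact (map_sum (QuotientAddGroup.mk' (relSub e)) (fun s => Finsupp.single s 1)
    Finset.univ).symm

lemma pairSum {M : Type*} [AddCommMonoid M] (f : ℕ → M) (n : ℕ) :
    ∑ k ∈ Finset.Icc 1 n, (f (2*k-1) + f (2*k)) = ∑ i ∈ Finset.Icc 1 (2*n), f i := by
  induction n with
  | zero => simp
  | succ n ih =>
    rw [Finset.sum_Icc_succ_top (by omega), ih,
      show 2*(n+1) = (2*n+1)+1 from by ring,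
      Finset.sum_Icc_succ_top (by omega),
      Finset.sum_Icc_succ_top (by omega),
      show (2*n+1)+1-1 = 2*n+1 from by omega]
    abel

lemma sum_Icc_top1 {M : Type*} [AddCommMonoid M] (f : ℕ → M) (n : ℕ) (h : 1 ≤ n) :
    ∑ i ∈ Finset.Icc 1 n, f i = ∑ i ∈ Finset.Icc 1 (n-1), f i + f n := by
  obtain ⟨m, rfl⟩ : ∃ m, n = m+1 := ⟨n-1, by omega⟩
  rw [Finset.sum_Icc_succ_top (by omega), show m+1-1 = m from by omega]

lemma sum_Icc_top4 {M : Type*} [AddCommMonoid M] (f : ℕ → M) (n : ℕ) (h : 4 ≤ n) :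
    ∑ i ∈ Finset.Icc 1 n, f i
      = ∑ i ∈ Finset.Icc 1 (n-4), f i + f (n-3) + f (n-2) + f (n-1) + f n := by
  obtain ⟨m, rfl⟩ : ∃ m, n = m+4 := ⟨n-4, by omega⟩
  rw [show m+4 = ((m+1)+1)+1+1 from by omega, Finset.sum_Icc_succ_top (by omega),
    Finset.sum_Icc_succ_top (by omega), Finset.sum_Icc_succ_top (by omega),
    Finset.sum_Icc_succ_top (by omega),
    show ((m+1)+1)+1+1-4 = m from by omega, show ((m+1)+1)+1+1-3 = m+1 from by omega,
    show ((m+1)+1)+1+1-2 = (m+1)+1 from by omega,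
    show ((m+1)+1)+1+1-1 = ((m+1)+1)+1 from by omega]

lemma uGen4_zero (s₂ ν : ℕ) :
    uGen4 s₂ ν 0 = Psi (e4 s₂ ν) (wPt4 s₂ ν (2^ν-1)) := by
  unfold uGen4
  rw [if_pos rfl]

lemma uGen4_top (s₂ ν : ℕ) (h : 2^ν - 2 ≠ 0) :
    uGen4 s₂ ν (2^ν-2)
      = Psi (e4 s₂ ν) (wPt4 s₂ ν (2^ν-3)) - Psi (e4 s₂ ν) (wPt4 s₂ ν (2^ν-2)) := by
  unfold uGen4
  rw [if_neg h, if_pos rfl]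

lemma uGen4_odd (s₂ ν j : ℕ) (h0 : j ≠ 0) (h1 : j ≠ 2^ν-2) (h2 : j % 2 = 1) :
    uGen4 s₂ ν j
      = Psi (e4 s₂ ν) (wPt4 s₂ ν j) - Psi (e4 s₂ ν) (wPt4 s₂ ν (2^ν-1)) := by
  unfold uGen4
  rw [if_neg h0, if_neg h1, if_pos h2]

lemma uGen4_even (s₂ ν j : ℕ) (h0 : j ≠ 0) (h1 : j ≠ 2^ν-2) (h2 : j % 2 ≠ 1) :
    uGen4 s₂ ν j
      = Psi (e4 s₂ ν) (wPt4 s₂ ν (j-1)) + Psi (e4 s₂ ν) (wPt4 s₂ ν j)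
        - Psi (e4 s₂ ν) (wPt4 s₂ ν (2^ν-1)) - Psi (e4 s₂ ν) (wPt4 s₂ ν (2^ν)) := by
  unfold uGen4
  rw [if_neg h0, if_neg h1, if_neg h2]

lemma vGen4_odd (s₂ ν j : ℕ) (h : j % 2 = 1) :
    vGen4 s₂ ν j
      = Psi (e4 s₂ ν) (tPt4 s₂ ν j) - Psi (e4 s₂ ν) (tPt4 s₂ ν (j+1)) := by
  unfold vGen4
  rw [if_pos h]

lemma vGen4_even (s₂ ν j : ℕ) (h : j % 2 ≠ 1) :
    vGen4 s₂ ν j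
      = Psi (e4 s₂ ν) (tPt4 s₂ ν (j-1)) + Psi (e4 s₂ ν) (tPt4 s₂ ν j)
        - Psi (e4 s₂ ν) (tPt4 s₂ ν (2^ν-1)) - Psi (e4 s₂ ν) (tPt4 s₂ ν (2^ν)) := by
  unfold vGen4
  rw [if_neg h]
/-- if `τ : Σ ≃ Σ` preserves `Σ₂` and swaps `w_{2k-1} ↔ w_{2k}` and
`t_{2k-1} ↔ t_{2k}` for all `1 ≤ k ≤ 2^{ν-1}`, and `T` is the endomorphism of
`G(Σ, e)` determined by `T (Ψ s) = Ψ (τ s)`, then (with `m = 6s₂ + 5·2^ν`):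
`T (Ψ w) = (1 + m) • Ψ w + ∑_{i=1}^{2^{ν-1}-1} u_{2i}`;
`T u_{2k-1} = u_{2k-1} + u_{2k}` and `T u_{2k} = u_{2k}` for `1 ≤ k ≤ 2^{ν-1} - 2`;
`T u_{2^ν-3} = m • Ψ w + u_{2^ν-3} + ∑_{i=1}^{2^{ν-1}-2} u_{2i}`;
`T u_{2^ν-2} = u_{2^ν-2}`; `T v_{2k-1} = -v_{2k-1}` for `1 ≤ k ≤ 2^{ν-1}`; and
`T v_{2k} = v_{2k}` for `1 ≤ k ≤ 2^{ν-1} - 1`. -/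
theorem stmt11 (s₂ ν : ℕ) (hν : 2 ≤ ν)
    (τ : Sig4 s₂ ν ≃ Sig4 s₂ ν)
    (hτ2 : ∀ x : Fin s₂, ∃ y : Fin s₂, τ (Sum.inl x) = Sum.inl y)
    (hτ4 : ∀ k : ℕ, 1 ≤ k → k ≤ 2 ^ (ν - 1) →
      τ (wPt4 s₂ ν (2 * k - 1)) = wPt4 s₂ ν (2 * k) ∧
      τ (wPt4 s₂ ν (2 * k)) = wPt4 s₂ ν (2 * k - 1))
    (hτ6 : ∀ k : ℕ, 1 ≤ k → k ≤ 2 ^ (ν - 1) →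
      τ (tPt4 s₂ ν (2 * k - 1)) = tPt4 s₂ ν (2 * k) ∧
      τ (tPt4 s₂ ν (2 * k)) = tPt4 s₂ ν (2 * k - 1))
    (T : CompGrp (e4 s₂ ν) →+ CompGrp (e4 s₂ ν))
    (hT : ∀ s : Sig4 s₂ ν, T (Psi (e4 s₂ ν) s) = Psi (e4 s₂ ν) (τ s)) :
    T (uGen4 s₂ ν 0) = (1 + (6 * s₂ + 5 * 2 ^ ν)) • uGen4 s₂ ν 0 +
      ∑ i ∈ Finset.Icc 1 (2 ^ (ν - 1) - 1), uGen4 s₂ ν (2 * i) ∧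
    (∀ k : ℕ, 1 ≤ k → k ≤ 2 ^ (ν - 1) - 2 →
      T (uGen4 s₂ ν (2 * k - 1)) = uGen4 s₂ ν (2 * k - 1) + uGen4 s₂ ν (2 * k) ∧
      T (uGen4 s₂ ν (2 * k)) = uGen4 s₂ ν (2 * k)) ∧
    T (uGen4 s₂ ν (2 ^ ν - 3)) = (6 * s₂ + 5 * 2 ^ ν) • uGen4 s₂ ν 0 +
      uGen4 s₂ ν (2 ^ ν - 3) +
      ∑ i ∈ Finset.Icc 1 (2 ^ (ν - 1) - 2), uGen4 s₂ ν (2 * i) ∧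
    T (uGen4 s₂ ν (2 ^ ν - 2)) = uGen4 s₂ ν (2 ^ ν - 2) ∧
    (∀ k : ℕ, 1 ≤ k → k ≤ 2 ^ (ν - 1) →
      T (vGen4 s₂ ν (2 * k - 1)) = -(vGen4 s₂ ν (2 * k - 1))) ∧
    (∀ k : ℕ, 1 ≤ k → k ≤ 2 ^ (ν - 1) - 1 →
      T (vGen4 s₂ ν (2 * k)) = vGen4 s₂ ν (2 * k)) := by
  obtain ⟨K2, hK2⟩ : ∃ K2, K2 = 2^(ν-2) := ⟨_, rfl⟩
  have hK2pos : 1 ≤ K2 := by rw [hK2]; exact Nat.pow_pos (n := ν-2) (by norm_num)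
  have hN : 2^ν = 4*K2 := by
    rw [hK2]
    have h := pow_add 2 2 (ν-2)
    rw [show 2+(ν-2) = ν from by omega] at h
    rw [h]; ring
  have hNz : (2:ℤ)^ν = 4*(K2:ℤ) := by exact_mod_cast hN
  have hK : 2^(ν-1) = 2*K2 := by
    rw [hK2]
    have h := pow_add 2 1 (ν-2)
    rw [show 1+(ν-2) = ν-1 from by omega] at h
    rw [h]; ring
  -- 2-torsion relations among the w-points
  have z2w : ∀ i j : ℕ, (2:ℤ) • Psi (e4 s₂ ν) (wPt4 s₂ ν i)
      - (2:ℤ) • Psi (e4 s₂ ν) (wPt4 s₂ ν j) = 0 := by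
    intro i j
    rw [sub_eq_zero]
    exact psi_rel (e4 s₂ ν) (wPt4 s₂ ν i) (wPt4 s₂ ν j)
  -- action of T on the points
  have hTw : ∀ k : ℕ, 1 ≤ k → k ≤ 2*K2 →
      T (Psi (e4 s₂ ν) (wPt4 s₂ ν (2*k-1))) = Psi (e4 s₂ ν) (wPt4 s₂ ν (2*k)) ∧
      T (Psi (e4 s₂ ν) (wPt4 s₂ ν (2*k))) = Psi (e4 s₂ ν) (wPt4 s₂ ν (2*k-1)) := by
    intro k h1 h2
    obtain ⟨ha, hb⟩ := hτ4 k h1 (by rw [hK]; omega)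
    exact ⟨by rw [hT, ha], by rw [hT, hb]⟩
  have hTt : ∀ k : ℕ, 1 ≤ k → k ≤ 2*K2 →
      T (Psi (e4 s₂ ν) (tPt4 s₂ ν (2*k-1))) = Psi (e4 s₂ ν) (tPt4 s₂ ν (2*k)) ∧
      T (Psi (e4 s₂ ν) (tPt4 s₂ ν (2*k))) = Psi (e4 s₂ ν) (tPt4 s₂ ν (2*k-1)) := by
    intro k h1 h2
    obtain ⟨ha, hb⟩ := hτ6 k h1 (by rw [hK]; omega)
    exact ⟨by rw [hT, ha], by rw [hT, hb]⟩
  have hTw1 : T (Psi (e4 s₂ ν) (wPt4 s₂ ν (2^ν-1))) = Psi (e4 s₂ ν) (wPt4 s₂ ν (2^ν)) := by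
    have h := (hTw (2*K2) (by omega) le_rfl).1
    rwa [show 2*(2*K2)-1 = 2^ν-1 from by rw [hN]; omega,
      show 2*(2*K2) = 2^ν from by rw [hN]; ring] at h
  have hTw2 : T (Psi (e4 s₂ ν) (wPt4 s₂ ν (2^ν))) = Psi (e4 s₂ ν) (wPt4 s₂ ν (2^ν-1)) := by
    have h := (hTw (2*K2) (by omega) le_rfl).2
    rwa [show 2*(2*K2)-1 = 2^ν-1 from by rw [hN]; omega,
      show 2*(2*K2) = 2^ν from by rw [hN]; ring] at h
  have hTw3 : T (Psi (e4 s₂ ν) (wPt4 s₂ ν (2^ν-3))) = Psi (e4 s₂ ν) (wPt4 s₂ ν (2^ν-2)) := by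
    have h := (hTw (2*K2-1) (by omega) (by omega)).1
    rwa [show 2*(2*K2-1)-1 = 2^ν-3 from by rw [hN]; omega,
      show 2*(2*K2-1) = 2^ν-2 from by rw [hN]; omega] at h
  have hTw4 : T (Psi (e4 s₂ ν) (wPt4 s₂ ν (2^ν-2))) = Psi (e4 s₂ ν) (wPt4 s₂ ν (2^ν-3)) := by
    have h := (hTw (2*K2-1) (by omega) (by omega)).2
    rwa [show 2*(2*K2-1)-1 = 2^ν-3 from by rw [hN]; omega,
      show 2*(2*K2-1) = 2^ν-2 from by rw [hN]; omega] at h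
  have hTt1 : T (Psi (e4 s₂ ν) (tPt4 s₂ ν (2^ν-1))) = Psi (e4 s₂ ν) (tPt4 s₂ ν (2^ν)) := by
    have h := (hTt (2*K2) (by omega) le_rfl).1
    rwa [show 2*(2*K2)-1 = 2^ν-1 from by rw [hN]; omega,
      show 2*(2*K2) = 2^ν from by rw [hN]; ring] at h
  have hTt2 : T (Psi (e4 s₂ ν) (tPt4 s₂ ν (2^ν))) = Psi (e4 s₂ ν) (tPt4 s₂ ν (2^ν-1)) := by
    have h := (hTt (2*K2) (by omega) le_rfl).2
    rwa [show 2*(2*K2)-1 = 2^ν-1 from by rw [hN]; omega,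
      show 2*(2*K2) = 2^ν from by rw [hN]; ring] at h
  -- the sum relation
  have hAx : ∀ x : Fin s₂, Psi (e4 s₂ ν) (Sum.inl x : Sig4 s₂ ν)
      = (2:ℤ) • Psi (e4 s₂ ν) (wPt4 s₂ ν (2^ν-1)) := by
    intro x
    have h := psi_rel (e4 s₂ ν) (Sum.inl x : Sig4 s₂ ν) (wPt4 s₂ ν (2^ν-1))
    rwa [show e4 s₂ ν (Sum.inl x : Sig4 s₂ ν) = 1 from rfl,
      show e4 s₂ ν (wPt4 s₂ ν (2^ν-1)) = 2 from rfl, one_smul] at h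
  have hWx : ∀ x : Fin (2^ν), (2:ℤ) • Psi (e4 s₂ ν) (Sum.inr (Sum.inl x) : Sig4 s₂ ν)
      = (2:ℤ) • Psi (e4 s₂ ν) (wPt4 s₂ ν (2^ν-1)) := by
    intro x
    have h := psi_rel (e4 s₂ ν) (Sum.inr (Sum.inl x) : Sig4 s₂ ν) (wPt4 s₂ ν (2^ν-1))
    rwa [show e4 s₂ ν (Sum.inr (Sum.inl x) : Sig4 s₂ ν) = 2 from rfl,
      show e4 s₂ ν (wPt4 s₂ ν (2^ν-1)) = 2 from rfl] at h
  have hTx : ∀ x : Fin (2^ν), (3:ℤ) • Psi (e4 s₂ ν) (Sum.inr (Sum.inr x) : Sig4 s₂ ν)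
      = (2:ℤ) • Psi (e4 s₂ ν) (wPt4 s₂ ν (2^ν-1)) := by
    intro x
    have h := psi_rel (e4 s₂ ν) (Sum.inr (Sum.inr x) : Sig4 s₂ ν) (wPt4 s₂ ν (2^ν-1))
    rwa [show e4 s₂ ν (Sum.inr (Sum.inr x) : Sig4 s₂ ν) = 3 from rfl,
      show e4 s₂ ν (wPt4 s₂ ν (2^ν-1)) = 2 from rfl] at h
  have hFin : ∑ x : Fin (2^ν), Psi (e4 s₂ ν) (Sum.inr (Sum.inl x) : Sig4 s₂ ν)
      = ∑ i ∈ Finset.Icc 1 (2^ν), Psi (e4 s₂ ν) (wPt4 s₂ ν i) := by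
    have hwval : ∀ x : Fin (2^ν), wPt4 s₂ ν (1 + x.val) = Sum.inr (Sum.inl x) := by
      intro x
      have hv : (1 + x.val - 1) % 2^ν = x.val := by
        rw [Nat.add_sub_cancel_left]
        exact Nat.mod_eq_of_lt x.isLt
      unfold wPt4
      simp only [Sum.inr.injEq, Sum.inl.injEq]
      exact Fin.ext hv
    rw [← Finset.Ico_add_one_right_eq_Icc, Finset.sum_Ico_eq_sum_range, show 2^ν + 1 - 1 = 2^ν from by omega,
      ← Fin.sum_univ_eq_sum_range (fun i => Psi (e4 s₂ ν) (wPt4 s₂ ν (1+i)))]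
    refine Finset.sum_congr rfl fun x _ => ?_
    rw [hwval x]
  have hB0 := psi_sum (e4 s₂ ν)
  rw [Fintype.sum_sum_type, Fintype.sum_sum_type] at hB0
  have e1 : ∑ x : Fin s₂, (3:ℤ) • Psi (e4 s₂ ν) (Sum.inl x : Sig4 s₂ ν)
      = (6*(s₂:ℤ)) • Psi (e4 s₂ ν) (wPt4 s₂ ν (2^ν-1)) := by
    have h : ∀ x ∈ (Finset.univ : Finset (Fin s₂)),
        (3:ℤ) • Psi (e4 s₂ ν) (Sum.inl x : Sig4 s₂ ν)
          = (3:ℤ) • (2:ℤ) • Psi (e4 s₂ ν) (wPt4 s₂ ν (2^ν-1)) := by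
      intro x _
      rw [hAx x]
    rw [Finset.sum_congr rfl h, Finset.sum_const, Finset.card_univ, Fintype.card_fin]
    match_scalars
    push_cast
    ring
  have e3 : ∑ x : Fin (2^ν), (3:ℤ) • Psi (e4 s₂ ν) (Sum.inr (Sum.inr x) : Sig4 s₂ ν)
      = (8*(K2:ℤ)) • Psi (e4 s₂ ν) (wPt4 s₂ ν (2^ν-1)) := by
    have h : ∀ x ∈ (Finset.univ : Finset (Fin (2^ν))),
        (3:ℤ) • Psi (e4 s₂ ν) (Sum.inr (Sum.inr x) : Sig4 s₂ ν)
          = (2:ℤ) • Psi (e4 s₂ ν) (wPt4 s₂ ν (2^ν-1)) := fun x _ => hTx x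
    rw [Finset.sum_congr rfl h, Finset.sum_const, Finset.card_univ, Fintype.card_fin]
    match_scalars <;> (push_cast [hNz]; try ring)
  have e2 : ∑ x : Fin (2^ν), (3:ℤ) • Psi (e4 s₂ ν) (Sum.inr (Sum.inl x) : Sig4 s₂ ν)
      = ∑ i ∈ Finset.Icc 1 (2^ν), Psi (e4 s₂ ν) (wPt4 s₂ ν i)
        + (8*(K2:ℤ)) • Psi (e4 s₂ ν) (wPt4 s₂ ν (2^ν-1)) := by
    have h : ∀ x ∈ (Finset.univ : Finset (Fin (2^ν))),
        (3:ℤ) • Psi (e4 s₂ ν) (Sum.inr (Sum.inl x) : Sig4 s₂ ν)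
          = Psi (e4 s₂ ν) (Sum.inr (Sum.inl x) : Sig4 s₂ ν)
            + (2:ℤ) • Psi (e4 s₂ ν) (wPt4 s₂ ν (2^ν-1)) := by
      intro x _
      rw [← hWx x]
      module
    rw [Finset.sum_congr rfl h, Finset.sum_add_distrib, Finset.sum_const,
      Finset.card_univ, Fintype.card_fin, hFin]
    match_scalars <;> (push_cast [hNz]; try ring)
  have hsum : ∑ i ∈ Finset.Icc 1 (2^ν), Psi (e4 s₂ ν) (wPt4 s₂ ν i)
      = (-(6*(s₂:ℤ)) - 16*(K2:ℤ)) • Psi (e4 s₂ ν) (wPt4 s₂ ν (2^ν-1)) := by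
    have h3 := congrArg (⇑(AddMonoidHom.mk'
      (fun z : CompGrp (e4 s₂ ν) => (3:ℤ) • z) (fun a b => by module))) hB0
    rw [map_add, map_add, map_sum, map_sum, map_sum, map_zero] at h3
    simp only [AddMonoidHom.mk'_apply] at h3
    rw [e1, e2, e3] at h3
    rw [← sub_eq_zero, ← h3]
    module
  have hUsum : ∑ i ∈ Finset.Icc 1 (2*K2-2), uGen4 s₂ ν (2*i)
      = (-(6*(s₂:ℤ)) - 16*(K2:ℤ)) • Psi (e4 s₂ ν) (wPt4 s₂ ν (2^ν-1))
        - Psi (e4 s₂ ν) (wPt4 s₂ ν (2^ν-3)) - Psi (e4 s₂ ν) (wPt4 s₂ ν (2^ν-2))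
        - Psi (e4 s₂ ν) (wPt4 s₂ ν (2^ν-1)) - Psi (e4 s₂ ν) (wPt4 s₂ ν (2^ν))
        - (2*K2-2) • (Psi (e4 s₂ ν) (wPt4 s₂ ν (2^ν-1))
            + Psi (e4 s₂ ν) (wPt4 s₂ ν (2^ν))) := by
    have h1 : ∀ i ∈ Finset.Icc 1 (2*K2-2), uGen4 s₂ ν (2*i)
        = ((fun n => Psi (e4 s₂ ν) (wPt4 s₂ ν n)) (2*i-1)
            + (fun n => Psi (e4 s₂ ν) (wPt4 s₂ ν n)) (2*i))
          - (Psi (e4 s₂ ν) (wPt4 s₂ ν (2^ν-1)) + Psi (e4 s₂ ν) (wPt4 s₂ ν (2^ν))) := by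
      intro i hi
      obtain ⟨hi1, hi2⟩ := Finset.mem_Icc.mp hi
      rw [uGen4_even s₂ ν (2*i) (by omega) (by rw [hN]; omega) (by omega)]
      abel
    rw [Finset.sum_congr rfl h1, Finset.sum_sub_distrib, Finset.sum_const, Nat.card_Icc,
      pairSum (fun n => Psi (e4 s₂ ν) (wPt4 s₂ ν n)) (2*K2-2),
      show 2*(2*K2-2) = 2^ν-4 from by rw [hN]; omega,
      show 2*K2-2+1-1 = 2*K2-2 from by omega]
    have h4 := sum_Icc_top4 (fun n => Psi (e4 s₂ ν) (wPt4 s₂ ν n)) (2^ν) (by rw [hN]; omega)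
    rw [hsum] at h4
    have h4' : (∑ i ∈ Finset.Icc 1 (2^ν-4), Psi (e4 s₂ ν) (wPt4 s₂ ν i)
        + Psi (e4 s₂ ν) (wPt4 s₂ ν (2^ν-3)) + Psi (e4 s₂ ν) (wPt4 s₂ ν (2^ν-2))
        + Psi (e4 s₂ ν) (wPt4 s₂ ν (2^ν-1)) + Psi (e4 s₂ ν) (wPt4 s₂ ν (2^ν)))
        - (-(6*(s₂:ℤ)) - 16*(K2:ℤ)) • Psi (e4 s₂ ν) (wPt4 s₂ ν (2^ν-1)) = 0 := by
      rw [sub_eq_zero]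
      exact h4.symm
    rw [← sub_eq_zero, ← h4']
    match_scalars <;> omega
  refine ⟨?_, ?_, ?_, ?_, ?_, ?_⟩
  · -- T (Ψ w)
    rw [uGen4_zero, hTw1, show 2^(ν-1)-1 = 2*K2-1 from by rw [hK],
      sum_Icc_top1 (fun i => uGen4 s₂ ν (2*i)) (2*K2-1) (by omega)]
    beta_reduce
    rw [show 2*K2-1-1 = 2*K2-2 from by omega,
      show 2*(2*K2-1) = 2^ν-2 from by rw [hN]; omega,
      uGen4_top s₂ ν (by rw [hN]; omega), hUsum,
      show 1 + (6*s₂ + 5*2^ν) = 1 + (6*s₂ + 20*K2) from by rw [hN]; ring]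
    have hc : (K2:ℤ) • ((2:ℤ) • Psi (e4 s₂ ν) (wPt4 s₂ ν (2^ν))
        - (2:ℤ) • Psi (e4 s₂ ν) (wPt4 s₂ ν (2^ν-1)))
        + ((2:ℤ) • Psi (e4 s₂ ν) (wPt4 s₂ ν (2^ν-2))
          - (2:ℤ) • Psi (e4 s₂ ν) (wPt4 s₂ ν (2^ν-1))) = 0 := by
      rw [z2w, z2w, smul_zero, add_zero]
    rw [← sub_eq_zero, ← hc]
    match_scalars <;> omega
  · -- u_{2k-1}, u_{2k}
    intro k hk1 hk2
    rw [hK] at hk2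
    constructor
    · rw [uGen4_odd s₂ ν (2*k-1) (by omega) (by rw [hN]; omega) (by omega),
        uGen4_even s₂ ν (2*k) (by omega) (by rw [hN]; omega) (by omega),
        map_sub, (hTw k hk1 (by omega)).1, hTw1]
      have hc : (2:ℤ) • Psi (e4 s₂ ν) (wPt4 s₂ ν (2^ν-1))
          - (2:ℤ) • Psi (e4 s₂ ν) (wPt4 s₂ ν (2*k-1)) = 0 := z2w _ _
      rw [← sub_eq_zero, ← hc]
      module
    · rw [uGen4_even s₂ ν (2*k) (by omega) (by rw [hN]; omega) (by omega),
        map_sub, map_sub, map_add, (hTw k hk1 (by omega)).1, (hTw k hk1 (by omega)).2,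
        hTw1, hTw2]
      abel
  · -- u_{2^ν - 3}
    rw [uGen4_odd s₂ ν (2^ν-3) (by rw [hN]; omega) (by rw [hN]; omega) (by rw [hN]; omega),
      map_sub, hTw3, hTw1, uGen4_zero,
      show 2^(ν-1)-2 = 2*K2-2 from by rw [hK], hUsum,
      show 6*s₂ + 5*2^ν = 6*s₂ + 20*K2 from by rw [hN]; ring]
    have hc : ((2:ℤ) • Psi (e4 s₂ ν) (wPt4 s₂ ν (2^ν-2))
        - (2:ℤ) • Psi (e4 s₂ ν) (wPt4 s₂ ν (2^ν-1)))
        + ((K2:ℤ)-1) • ((2:ℤ) • Psi (e4 s₂ ν) (wPt4 s₂ ν (2^ν))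
          - (2:ℤ) • Psi (e4 s₂ ν) (wPt4 s₂ ν (2^ν-1))) = 0 := by
      rw [z2w, z2w, smul_zero, add_zero]
    rw [← sub_eq_zero, ← hc]
    match_scalars <;> omega
  · -- u_{2^ν - 2}
    rw [uGen4_top s₂ ν (by rw [hN]; omega), map_sub, hTw3, hTw4]
    have hc : (2:ℤ) • Psi (e4 s₂ ν) (wPt4 s₂ ν (2^ν-2))
        - (2:ℤ) • Psi (e4 s₂ ν) (wPt4 s₂ ν (2^ν-3)) = 0 := z2w _ _
    rw [← sub_eq_zero, ← hc]
    module
  · -- v_{2k-1}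
    intro k hk1 hk2
    rw [hK] at hk2
    rw [vGen4_odd s₂ ν (2*k-1) (by omega), show 2*k-1+1 = 2*k from by omega,
      map_sub, (hTt k hk1 hk2).1, (hTt k hk1 hk2).2, neg_sub]
  · -- v_{2k}
    intro k hk1 hk2
    rw [hK] at hk2
    rw [vGen4_even s₂ ν (2*k) (by omega),
      map_sub, map_sub, map_add, (hTt k hk1 (by omega)).1, (hTt k hk1 (by omega)).2,
      hTt1, hTt2]
    abel
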